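/- Let n ≡ 0 (mod 4) and let P be a bichromatic convex point set with n red and n blue points whose coloring is a 4-block coloring with blocks of sizes n/2+1, n/2, n/2−1, n/2 in cyclic order R1, B1, R2, B2. Then the maximum of cr(M) over all straight-line bichromatic perfect matchings M on P equals 3n²/8 − n/2, the same value as for the balanced 4-block coloring. -/

import Mathlib

open Finset

/-- Two closed-segment edges cross: their open segments (relative interiors) intersect. -/
def SegCross (a b c d : ℝ × ℝ) : Prop :=
  ∃ x : ℝ × ℝ, x ∈ openSegment ℝ a b ∧ x ∈ openSegment ℝ c d

/-- `f` is a straight-line bichromatic perfect matching on points indexed by `Fin m`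
with coloring `c` (`true` = red, `false` = blue): it is a fixed-point-free involution
matching points of different colors. -/
def IsBPM (m : ℕ) (c : Fin m → Bool) (f : Fin m → Fin m) : Prop :=
  Function.Involutive f ∧ (∀ i, f i ≠ i) ∧ (∀ i, c (f i) ≠ c i)

/-- Number of crossing pairs of edges of the matching `f` on the points `p`:
each edge is represented by its smaller endpoint. -/
noncomputable def crNum (m : ℕ) (p : Fin m → ℝ × ℝ) (f : Fin m → Fin m) : ℕ :=
  Nat.card {q : Fin m × Fin m // q.1 < q.2 ∧ q.1 < f q.1 ∧ q.2 < f q.2 ∧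
    SegCross (p q.1) (p (f q.1)) (p q.2) (p (f q.2))}

/-- The points `p 0, p 1, …` are distinct and in strictly convex position,
listed in clockwise order (every triple is negatively oriented). -/
def ConvexCW (m : ℕ) (p : Fin m → ℝ × ℝ) : Prop :=
  Function.Injective p ∧
  ∀ i j k : Fin m, (i : ℕ) < (j : ℕ) → (j : ℕ) < (k : ℕ) →
    ((p j).1 - (p i).1) * ((p k).2 - (p i).2) -
      ((p j).2 - (p i).2) * ((p k).1 - (p i).1) < 0

/-- The points are distinct and in general position: no three collinear. -/
def GenPos (m : ℕ) (p : Fin m → ℝ × ℝ) : Prop :=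
  Function.Injective p ∧
  ∀ i j k : Fin m, i ≠ j → i ≠ k → j ≠ k →
    ¬ Collinear ℝ ({p i, p j, p k} : Set (ℝ × ℝ))

/-- The coloring has exactly `n` red points (hence `n` blue points among the `2n`). -/
def Bichrom (n : ℕ) (c : Fin (2 * n) → Bool) : Prop :=
  (Finset.univ.filter fun i : Fin (2 * n) => c i = true).card = n

/-- The coloring alternates along the (cyclic) convex hull order. -/
def Alternating (m : ℕ) (c : Fin m → Bool) : Prop :=
  ∀ i j : Fin m, (j : ℕ) = ((i : ℕ) + 1) % m → c j ≠ c i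

/-- The coloring is a 4-block coloring: starting at position `t` along the cyclic order,
there come `r1` red points, then `b1` blue, then `r2` red, then `b2` blue,
all four blocks nonempty. -/
def FourBlockAt (n : ℕ) (c : Fin (2 * n) → Bool) (t : Fin (2 * n))
    (r1 b1 r2 b2 : ℕ) : Prop :=
  0 < r1 ∧ 0 < b1 ∧ 0 < r2 ∧ 0 < b2 ∧
  r1 + b1 + r2 + b2 = 2 * n ∧ r1 + r2 = n ∧
  ∀ j : Fin (2 * n), c (t + j) =
    if (j : ℕ) < r1 then true
    else if (j : ℕ) < r1 + b1 then false
    else if (j : ℕ) < r1 + b1 + r2 then true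
    else false

/-- The coloring is a 4-block coloring (for some start and block sizes). -/
def FourBlock (n : ℕ) (c : Fin (2 * n) → Bool) : Prop :=
  ∃ t r1 b1 r2 b2, FourBlockAt n c t r1 b1 r2 b2

/-- The coloring is a balanced 4-block coloring: any two block sizes differ by at most 1. -/
def Balanced4 (n : ℕ) (c : Fin (2 * n) → Bool) : Prop :=
  ∃ t r1 b1 r2 b2, FourBlockAt n c t r1 b1 r2 b2 ∧
    ∀ x ∈ [r1, b1, r2, b2], ∀ y ∈ [r1, b1, r2, b2], x ≤ y + 1

/-- The value `3n²/8 − n/2 + c` with `c` depending on `n mod 4`. -/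
def maxCrBound (n : ℕ) : ℚ :=
  3 * (n : ℚ) ^ 2 / 8 - (n : ℚ) / 2 +
    (if n % 4 = 0 then 0 else if n % 4 = 2 then -(1 / 2 : ℚ) else 1 / 8)

/-- `i` and `j` lie in the same monochromatic block: there is a cyclic arc from `i` to
`j` consisting of points of the color of `i`. -/
def SameBlockArc (m : ℕ) (c : Fin m → Bool) (i j : Fin m) : Prop :=
  ∃ d : Fin m, j = i + d ∧ ∀ e : Fin m, e ≤ d → c (i + e) = c i

def ori (a b c : ℝ × ℝ) : ℝ := (b.1 - a.1) * (c.2 - a.2) - (b.2 - a.2) * (c.1 - a.1)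

lemma ori_affine (a b u v : ℝ × ℝ) (θ : ℝ) :
    ori a b ((1 - θ) • u + θ • v) = (1 - θ) * ori a b u + θ * ori a b v := by
  simp only [ori, Prod.fst_add, Prod.snd_add, Prod.smul_fst, Prod.smul_snd, smul_eq_mul]
  ring

lemma mem_openSegment_iff' {a b x : ℝ × ℝ} :
    x ∈ openSegment ℝ a b ↔ ∃ θ : ℝ, 0 < θ ∧ θ < 1 ∧ x = (1 - θ) • a + θ • b := by
  rw [openSegment_eq_image]
  constructor
  · rintro ⟨θ, ⟨h0, h1⟩, rfl⟩; exact ⟨θ, h0, h1, rfl⟩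
  · rintro ⟨θ, h0, h1, rfl⟩; exact ⟨θ, ⟨h0, h1⟩, rfl⟩

lemma not_segCross_same_side {a b c d : ℝ × ℝ} (h : 0 < ori a b c * ori a b d) :
    ¬ SegCross a b c d := by
  rintro ⟨x, hx1, hx2⟩
  rw [mem_openSegment_iff'] at hx1 hx2
  obtain ⟨θ, h0, h1, rfl⟩ := hx1
  obtain ⟨φ, g0, g1, he⟩ := hx2
  have e1 : ori a b ((1 - θ) • a + θ • b) = 0 := by
    rw [ori_affine]
    have ha : ori a b a = 0 := by unfold ori; ring
    have hb : ori a b b = 0 := by unfold ori; ring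
    rw [ha, hb]; ring
  have e2 : ori a b ((1 - θ) • a + θ • b) =
      (1 - φ) * ori a b c + φ * ori a b d := by rw [he, ori_affine]
  rcases mul_pos_iff.mp h with ⟨hp, hq⟩ | ⟨hp, hq⟩
  · nlinarith
  · nlinarith

lemma segCross_of_signs {a b c d : ℝ × ℝ} (h1 : 0 < ori a b c) (h2 : ori a b d < 0)
    (h3 : ori c d a < 0) (h4 : 0 < ori c d b) : SegCross a b c d := by
  have hD : ori c d a - ori c d b < 0 := by linarith
  have hE : 0 < ori a b c - ori a b d := by linarith
  set t := ori c d a / (ori c d a - ori c d b) with ht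
  set u := ori a b c / (ori a b c - ori a b d) with hu
  have ht0 : 0 < t := div_pos_of_neg_of_neg h3 hD
  have ht1 : t < 1 := by
    have he : t - 1 = ori c d b / (ori c d a - ori c d b) := by
      have hDne : ori c d a - ori c d b ≠ 0 := ne_of_lt hD
      rw [ht]; field_simp; ring
    have h5 := div_neg_of_pos_of_neg h4 hD
    linarith
  have hu0 : 0 < u := div_pos h1 hE
  have hu1 : u < 1 := by
    rw [hu, div_lt_one hE]; linarith
  have key : (1 - t) • a + t • b = (1 - u) • c + u • d := by
    have hDne : ori c d a - ori c d b ≠ 0 := ne_of_lt hD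
    have hEne : ori a b c - ori a b d ≠ 0 := ne_of_gt hE
    have e1 : (1 - t) * a.1 + t * b.1 = (1 - u) * c.1 + u * d.1 := by
      rw [ht, hu]; field_simp; unfold ori; ring
    have e2 : (1 - t) * a.2 + t * b.2 = (1 - u) * c.2 + u * d.2 := by
      rw [ht, hu]; field_simp; unfold ori; ring
    ext <;> simp only [Prod.fst_add, Prod.snd_add, Prod.smul_fst, Prod.smul_snd,
      smul_eq_mul] <;> [exact e1; exact e2]
  exact ⟨(1 - t) • a + t • b, mem_openSegment_iff'.mpr ⟨t, ht0, ht1, rfl⟩,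
    mem_openSegment_iff'.mpr ⟨u, hu0, hu1, key⟩⟩

def crossSet (m : ℕ) (f : Fin m → Fin m) : Finset (Fin m × Fin m) :=
  Finset.univ.filter fun q =>
    q.1 < q.2 ∧ q.1 < f q.1 ∧ q.2 < f q.2 ∧ q.2 < f q.1 ∧ f q.1 < f q.2

lemma convex_ori {m : ℕ} {p : Fin m → ℝ × ℝ} (hc : ConvexCW m p) {i j k : Fin m}
    (h1 : i < j) (h2 : j < k) : ori (p i) (p j) (p k) < 0 :=
  hc.2 i j k h1 h2

lemma ori_cyc (a b c : ℝ × ℝ) : ori a b c = ori b c a := by unfold ori; ring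
lemma ori_swap (a b c : ℝ × ℝ) : ori a b c = -ori a c b := by unfold ori; ring

lemma segCross_iff_of_convex {m : ℕ} {p : Fin m → ℝ × ℝ} (hc : ConvexCW m p)
    {f : Fin m → Fin m} (hf : Function.Involutive f) {i j : Fin m}
    (hij : i < j) (hi : i < f i) (hj : j < f j) :
    SegCross (p i) (p (f i)) (p j) (p (f j)) ↔ (j < f i ∧ f i < f j) := by
  have hfij : f i ≠ j := by
    intro h
    have : f j = i := by rw [← h, hf]
    rw [this] at hj; exact absurd (hij.trans hj) (lt_irrefl i)
  have hfifj : f i ≠ f j := fun h => by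
    cases hf.injective h; exact lt_irrefl _ hij
  constructor
  · intro hX
    by_contra hcon
    rcases lt_or_gt_of_ne hfij with hlt | hgt
    · -- f i < j : disjoint, both on same (negative) side
      have o1 : ori (p i) (p (f i)) (p j) < 0 := convex_ori hc hi hlt
      have o2 : ori (p i) (p (f i)) (p (f j)) < 0 :=
        convex_ori hc hi (hlt.trans hj)
      exact not_segCross_same_side (mul_pos_of_neg_of_neg o1 o2) hX
    · -- j < f i
      have h2 : ¬ f i < f j := fun h => hcon ⟨hgt, h⟩
      have hfj : f j < f i := lt_of_le_of_ne (not_lt.mp h2) hfifj.symm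
      have o1 : 0 < ori (p i) (p (f i)) (p j) := by
        have := convex_ori hc hij hgt
        rw [ori_swap] at this; linarith
      have o2 : 0 < ori (p i) (p (f i)) (p (f j)) := by
        have := convex_ori hc (hij.trans hj) hfj
        rw [ori_swap] at this; linarith
      exact not_segCross_same_side (mul_pos o1 o2) hX
  · rintro ⟨h1, h2⟩
    apply segCross_of_signs
    · have := convex_ori hc hij h1
      rw [ori_swap] at this; linarith
    · exact convex_ori hc hi h2
    · have := convex_ori hc hij hj
      rw [ori_cyc] at this
      -- ori (p i) (p j) (p (f j)) = ori (p j) (p (f j)) (p i)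
      linarith
    · have := convex_ori hc h1 h2
      rw [ori_swap] at this; linarith

lemma crNum_eq_crossSet {m : ℕ} {p : Fin m → ℝ × ℝ} {f : Fin m → Fin m}
    (hc : ConvexCW m p) (hf : Function.Involutive f) :
    crNum m p f = (crossSet m f).card := by
  classical
  rw [crNum, Nat.card_eq_fintype_card, Fintype.card_subtype, crossSet]
  apply Finset.card_bij (fun q _ => q)
  · intro q hq
    simp only [Finset.mem_filter, Finset.mem_univ, true_and] at hq ⊢
    obtain ⟨h1, h2, h3, h4⟩ := hq
    exact ⟨h1, h2, h3, (segCross_iff_of_convex hc hf h1 h2 h3).mp h4⟩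
  · intro a b _ _ h; exact h
  · intro q hq
    simp only [Finset.mem_filter, Finset.mem_univ, true_and] at hq
    obtain ⟨h1, h2, h3, h4, h5⟩ := hq
    refine ⟨q, ?_, rfl⟩
    simp only [Finset.mem_filter, Finset.mem_univ, true_and]
    exact ⟨h1, h2, h3, (segCross_iff_of_convex hc hf h1 h2 h3).mpr ⟨h4, h5⟩⟩

section FinArith
variable {m : ℕ} [NeZero m]

lemma one_mod_eq (hm : 2 ≤ m) : 1 % m = 1 := Nat.mod_eq_of_lt (by omega)

lemma val_sub_one (hm : 2 ≤ m) {a : Fin m} (h : a ≠ 0) : (a - 1).val = a.val - 1 := by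
  rw [Fin.sub_def]
  simp only [Fin.val_one', one_mod_eq hm]
  have h0 : a.val ≠ 0 := fun hh => h (Fin.ext hh)
  have h1 : a.val < m := a.isLt
  have e : m - 1 + a.val = m + (a.val - 1) := by omega
  rw [e, Nat.add_mod_left, Nat.mod_eq_of_lt (by omega)]

lemma val_zero_sub_one (hm : 2 ≤ m) : ((0:Fin m) - 1).val = m - 1 := by
  rw [Fin.sub_def]
  simp only [Fin.val_one', one_mod_eq hm, Fin.val_zero, Nat.zero_add]
  exact Nat.mod_eq_of_lt (by omega)

lemma val_add_one' (hm : 2 ≤ m) {a : Fin m} (h : a.val + 1 < m) : (a + 1).val = a.val + 1 := by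
  rw [Fin.add_def]
  simp only [Fin.val_one', one_mod_eq hm]
  exact Nat.mod_eq_of_lt h

lemma fin_sub_add (a : Fin m) : a - 1 + 1 = a := sub_add_cancel a 1
lemma fin_add_sub (a : Fin m) : a + 1 - 1 = a := add_sub_cancel_right a 1

end FinArith

def rot1 {m : ℕ} [NeZero m] (f : Fin m → Fin m) : Fin m → Fin m := fun i => f (i + 1) - 1

lemma rot1_invol {m : ℕ} [NeZero m] {f : Fin m → Fin m} (hf : Function.Involutive f) :
    Function.Involutive (rot1 f) := fun i => by
  simp [rot1, fin_sub_add, hf (i + 1), fin_add_sub]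

lemma rot1_fpf {m : ℕ} [NeZero m] {f : Fin m → Fin m} (hfp : ∀ i, f i ≠ i) :
    ∀ i, rot1 f i ≠ i := fun i h => by
  have : f (i + 1) = i + 1 := by
    have := congrArg (· + 1) h
    simpa [rot1, fin_sub_add] using this
  exact hfp _ this

lemma mem_crossSet {m : ℕ} {f : Fin m → Fin m} {q : Fin m × Fin m} :
    q ∈ crossSet m f ↔
      q.1 < q.2 ∧ q.1 < f q.1 ∧ q.2 < f q.2 ∧ q.2 < f q.1 ∧ f q.1 < f q.2 := by
  simp [crossSet]

lemma fin_pos_ne {m : ℕ} [NeZero m] {a b : Fin m} (h : a < b) : b ≠ 0 := by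
  intro hb; subst hb; exact absurd h (by simp [Fin.lt_def])

lemma fin_add_one_ne_zero {m : ℕ} [NeZero m] (hm : 2 ≤ m) {a : Fin m}
    (h : a.val + 1 < m) : a + 1 ≠ 0 := by
  intro hh
  have := congrArg Fin.val hh
  rw [val_add_one' hm h] at this
  simp at this

lemma fin_add_one_eq_zero {m : ℕ} [NeZero m] (hm : 2 ≤ m) {a : Fin m}
    (h : a.val = m - 1) : a + 1 = 0 := by
  apply Fin.ext
  rw [Fin.add_def]
  simp only [Fin.val_one', one_mod_eq hm, h]
  have : m - 1 + 1 = m := by omega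
  rw [this, Nat.mod_self]
  simp

lemma crossSet_card_rot1 {m : ℕ} [NeZero m] (hm : 2 ≤ m) {f : Fin m → Fin m}
    (hf : Function.Involutive f) (hfp : ∀ i, f i ≠ i) :
    (crossSet m f).card = (crossSet m (rot1 f)).card := by
  have hgx : ∀ x : Fin m, rot1 f (x - 1) = f x - 1 := fun x => by
    simp [rot1, fin_sub_add]
  have hgx' : ∀ x : Fin m, f (x + 1) = rot1 f x + 1 := fun x => by
    simp [rot1, fin_sub_add]
  apply Finset.card_bij'
    (i := fun q (_ : q ∈ crossSet m f) =>
      if q.1 = (0 : Fin m) then (q.2 - 1, f 0 - 1) else (q.1 - 1, q.2 - 1))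
    (j := fun q (_ : q ∈ crossSet m (rot1 f)) =>
      if f (q.2 + 1) = 0 then ((0 : Fin m), q.1 + 1) else (q.1 + 1, q.2 + 1))
  -- forward membership
  · rintro ⟨i, j⟩ hq
    rw [mem_crossSet] at hq
    obtain ⟨h1, h2, h3, h4, h5⟩ := hq
    simp only at h1 h2 h3 h4 h5 ⊢
    by_cases h0 : i = 0
    · subst h0
      simp only [eq_self_iff_true, if_true]
      rw [mem_crossSet]
      have hj0 : j ≠ 0 := fin_pos_ne h1
      have hf00 : f 0 ≠ 0 := fin_pos_ne h2
      have hfj0 : f j ≠ 0 := fin_pos_ne h3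
      have e1 := val_sub_one hm hj0
      have e2 := val_sub_one hm hf00
      have e3 := val_sub_one hm hfj0
      have e4 := val_zero_sub_one (m := m) hm
      have v1 := Fin.lt_def.mp h1
      have v2 := Fin.lt_def.mp h2
      have v3 := Fin.lt_def.mp h3
      have v4 := Fin.lt_def.mp h4
      have v5 := Fin.lt_def.mp h5
      have vfj : (f j).val < m := (f j).isLt
      refine ⟨?_, ?_, ?_, ?_, ?_⟩ <;>
        simp only [hgx, hf 0, Fin.lt_def, e1, e2, e3, e4] <;> omega
    · simp only [if_neg h0]
      rw [mem_crossSet]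
      have hj0 : j ≠ 0 := fin_pos_ne h1
      have hfi0 : f i ≠ 0 := fin_pos_ne h2
      have hfj0 : f j ≠ 0 := fin_pos_ne h3
      have e0 := val_sub_one hm h0
      have e1 := val_sub_one hm hj0
      have e2 := val_sub_one hm hfi0
      have e3 := val_sub_one hm hfj0
      have v1 := Fin.lt_def.mp h1
      have v2 := Fin.lt_def.mp h2
      have v3 := Fin.lt_def.mp h3
      have v4 := Fin.lt_def.mp h4
      have v5 := Fin.lt_def.mp h5
      have vi0 : i.val ≠ 0 := fun hh => h0 (Fin.ext (by simpa using hh))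
      refine ⟨?_, ?_, ?_, ?_, ?_⟩ <;>
        simp only [hgx, Fin.lt_def, e0, e1, e2, e3] <;> omega
  -- backward membership
  · rintro ⟨i, j⟩ hq
    rw [mem_crossSet] at hq
    obtain ⟨h1, h2, h3, h4, h5⟩ := hq
    simp only at h1 h2 h3 h4 h5 ⊢
    have v1 := Fin.lt_def.mp h1
    have v2 := Fin.lt_def.mp h2
    have v3 := Fin.lt_def.mp h3
    have v4 := Fin.lt_def.mp h4
    have v5 := Fin.lt_def.mp h5
    have vgj : (rot1 f j).val < m := (rot1 f j).isLt
    by_cases hb : f (j + 1) = 0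
    · simp only [if_pos hb]
      rw [mem_crossSet]
      have hf0 : f 0 = j + 1 := by rw [← hb, hf]
      have hwj : j.val + 1 < m := by omega
      have hwi : i.val + 1 < m := by omega
      have hwg : (rot1 f i).val + 1 < m := by
        -- rot1 f i < rot1 f j < m
        omega
      have ei := val_add_one' hm hwi
      have ej := val_add_one' hm hwj
      have eg := val_add_one' hm hwg
      refine ⟨?_, ?_, ?_, ?_, ?_⟩ <;>
        simp only [hgx', hf0, Fin.lt_def, ei, ej, eg, Fin.val_zero] <;> omega
    · simp only [if_neg hb]
      rw [mem_crossSet]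
      have hgj : (rot1 f j).val ≠ m - 1 := fun hh => hb (by
        rw [hgx' j]; exact fin_add_one_eq_zero hm hh)
      have hwj : j.val + 1 < m := by omega
      have hwi : i.val + 1 < m := by omega
      have hwgi : (rot1 f i).val + 1 < m := by omega
      have hwgj : (rot1 f j).val + 1 < m := by omega
      have ei := val_add_one' hm hwi
      have ej := val_add_one' hm hwj
      have egi := val_add_one' hm hwgi
      have egj := val_add_one' hm hwgj
      refine ⟨?_, ?_, ?_, ?_, ?_⟩ <;>
        simp only [hgx', Fin.lt_def, ei, ej, egi, egj] <;> omega
  -- left inverse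
  · rintro ⟨i, j⟩ hq
    rw [mem_crossSet] at hq
    obtain ⟨h1, h2, h3, h4, h5⟩ := hq
    simp only at h1 h2 h3 h4 h5 ⊢
    by_cases h0 : i = 0
    · subst h0
      simp only [fin_sub_add, hf 0, eq_self_iff_true, if_true]
    · simp only [if_neg h0]
      have hfj0 : f j ≠ 0 := fin_pos_ne h3
      have : f (j - 1 + 1) = f j := by rw [fin_sub_add]
      simp only [this, if_neg hfj0, fin_sub_add]
  -- right inverse
  · rintro ⟨i, j⟩ hq
    rw [mem_crossSet] at hq
    obtain ⟨h1, h2, h3, h4, h5⟩ := hq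
    simp only at h1 h2 h3 h4 h5 ⊢
    have v1 := Fin.lt_def.mp h1
    have v4 := Fin.lt_def.mp h4
    have vgj : (rot1 f j).val < m := (rot1 f j).isLt
    by_cases hb : f (j + 1) = 0
    · simp only [if_pos hb]
      have hf0 : f 0 = j + 1 := by rw [← hb, hf]
      simp only [eq_self_iff_true, if_true, fin_add_sub, hf0]
    · simp only [if_neg hb]
      have hwi : i.val + 1 < m := by
        have v2 := Fin.lt_def.mp h2
        omega
      have : i + 1 ≠ 0 := fin_add_one_ne_zero hm hwi
      simp only [if_neg this, fin_add_sub]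

lemma conj_invol {m : ℕ} [NeZero m] {f : Fin m → Fin m} (hf : Function.Involutive f)
    (t : Fin m) : Function.Involutive (fun i => f (i + t) - t) := fun i => by
  simp only
  rw [sub_add_cancel, hf, add_sub_cancel_right]

lemma conj_fpf {m : ℕ} [NeZero m] {f : Fin m → Fin m} (hfp : ∀ i, f i ≠ i) (t : Fin m) :
    ∀ i, (fun i => f (i + t) - t) i ≠ i := fun i h => by
  simp only at h
  apply hfp (i + t)
  have := congrArg (· + t) h
  simpa [sub_add_cancel] using this

open Fin.NatCast Fin.CommRing in
lemma crossSet_card_conj {m : ℕ} [NeZero m] (hm : 2 ≤ m) {f : Fin m → Fin m}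
    (hf : Function.Involutive f) (hfp : ∀ i, f i ≠ i) (t : Fin m) :
    (crossSet m f).card = (crossSet m (fun i => f (i + t) - t)).card := by
  obtain ⟨tv, rfl⟩ : ∃ tv : ℕ, (tv : Fin m) = t := ⟨t.val, Fin.cast_val_eq_self t⟩
  induction tv with
  | zero => simp
  | succ tv ih =>
    have h1 : (fun i : Fin m => f (i + ((tv : ℕ) + 1 : ℕ)) - ((tv : ℕ) + 1 : ℕ))
        = rot1 (fun i => f (i + (tv : Fin m)) - (tv : Fin m)) := by
      funext i
      simp only [rot1]
      have e1 : i + (((tv : ℕ) + 1 : ℕ) : Fin m) = i + 1 + (tv : Fin m) := by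
        push_cast; ring
      rw [e1, sub_sub]
      congr 1
      push_cast; ring
    rw [h1, ih]
    exact crossSet_card_rot1 hm (conj_invol hf _) (conj_fpf hfp _)

lemma card_lt_pairs {α : Type*} [LinearOrder α] [DecidableEq α] (R : Finset α) :
    ((R ×ˢ R).filter fun q => q.1 < q.2).card = R.card.choose 2 := by
  rw [← Finset.card_powersetCard 2 R]
  apply Finset.card_bij (fun q _ => ({q.1, q.2} : Finset α))
  · rintro ⟨a, b⟩ hq
    simp only [Finset.mem_filter, Finset.mem_product] at hq
    obtain ⟨⟨ha, hb⟩, hab⟩ := hq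
    rw [Finset.mem_powersetCard]
    refine ⟨?_, ?_⟩
    · intro x hx
      simp only [Finset.mem_insert, Finset.mem_singleton] at hx
      rcases hx with rfl | rfl <;> assumption
    · rw [Finset.card_insert_of_notMem (by simp [ne_of_lt hab]), Finset.card_singleton]
  · rintro ⟨a, b⟩ ha ⟨a', b'⟩ hb h
    simp only [Finset.mem_filter, Finset.mem_product] at ha hb
    have h1 : a ∈ ({a', b'} : Finset α) := by rw [← h]; simp
    have h2 : b ∈ ({a', b'} : Finset α) := by rw [← h]; simp
    have h3 : a' ∈ ({a, b} : Finset α) := by rw [h]; simp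
    simp only [Finset.mem_insert, Finset.mem_singleton] at h1 h2 h3
    have hab := ha.2; have hab' := hb.2
    have e1 : a = a' := by
      rcases h1 with h | h
      · exact h
      · rcases h3 with h' | h'
        · exact h'.symm
        · exfalso
          rw [h'] at hab'
          rw [h] at hab
          exact lt_irrefl _ (hab.trans hab')
    have e2 : b = b' := by
      rcases h2 with h | h
      · exfalso; rw [e1, h] at hab; exact lt_irrefl _ hab
      · exact h
    exact Prod.ext e1 e2
  · intro S hS
    rw [Finset.mem_powersetCard] at hS
    obtain ⟨hsub, hcard⟩ := hS
    obtain ⟨a, b, hab, rfl⟩ := Finset.card_eq_two.mp hcard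
    have ha : a ∈ R := hsub (by simp)
    have hb : b ∈ R := hsub (by simp)
    rcases lt_or_gt_of_ne hab with h | h
    · exact ⟨(a, b), by simp [Finset.mem_filter, Finset.mem_product, ha, hb, h], rfl⟩
    · refine ⟨(b, a), by simp [Finset.mem_filter, Finset.mem_product, ha, hb, h], ?_⟩
      rw [Finset.pair_comm]

lemma card_val_ico {m u v : ℕ} (hv : v ≤ m) :
    ((Finset.univ : Finset (Fin m)).filter fun i => u ≤ i.val ∧ i.val < v).card = v - u := by
  rw [← Nat.card_Ico u v]
  apply Finset.card_bij (fun i _ => i.val)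
  · intro i hi
    simp only [Finset.mem_filter] at hi
    rw [Finset.mem_Ico]; exact hi.2
  · intro i _ j _ h; exact Fin.ext h
  · intro a ha
    rw [Finset.mem_Ico] at ha
    exact ⟨⟨a, lt_of_lt_of_le ha.2 hv⟩, by simp [ha.1, ha.2], rfl⟩

lemma card_invol_pred {m : ℕ} {f : Fin m → Fin m} (hf : Function.Involutive f)
    (P Q : Fin m → Prop) [DecidablePred P] [DecidablePred Q] :
    ((Finset.univ : Finset (Fin m)).filter fun i => P i ∧ Q (f i)).card =
    ((Finset.univ : Finset (Fin m)).filter fun i => Q i ∧ P (f i)).card := by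
  apply Finset.card_bij (fun i _ => f i)
  · intro i hi
    simp only [Finset.mem_filter, Finset.mem_univ, true_and] at hi ⊢
    exact ⟨hi.2, by rw [hf]; exact hi.1⟩
  · intro i _ j _ h; exact hf.injective h
  · intro j hj
    simp only [Finset.mem_filter, Finset.mem_univ, true_and] at hj
    refine ⟨f j, ?_, hf j⟩
    simp only [Finset.mem_filter, Finset.mem_univ, true_and, hf j]
    exact ⟨hj.2, hj.1⟩

lemma card_reps {m : ℕ} {f : Fin m → Fin m} (hf : Function.Involutive f)
    (hfp : ∀ i, f i ≠ i) :
    2 * ((Finset.univ : Finset (Fin m)).filter fun i => i < f i).card = m := by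
  have h1 : ((Finset.univ : Finset (Fin m)).filter fun i => i < f i).card =
      ((Finset.univ : Finset (Fin m)).filter fun i => f i < i).card := by
    apply Finset.card_bij (fun i _ => f i)
    · intro i hi
      simp only [Finset.mem_filter, Finset.mem_univ, true_and] at hi ⊢
      rw [hf]; exact hi
    · intro i _ j _ h; exact hf.injective h
    · intro j hj
      simp only [Finset.mem_filter, Finset.mem_univ, true_and] at hj
      refine ⟨f j, ?_, hf j⟩
      simp only [Finset.mem_filter, Finset.mem_univ, true_and, hf j]
      exact hj
  have h2 : ((Finset.univ : Finset (Fin m)).filter fun i => i < f i) ∪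
      ((Finset.univ : Finset (Fin m)).filter fun i => f i < i) = Finset.univ := by
    rw [← Finset.filter_or]
    apply Finset.filter_true_of_mem
    intro i _
    rcases lt_or_gt_of_ne (Ne.symm (hfp i)) with h | h
    · exact Or.inl h
    · exact Or.inr h
  have h3 : Disjoint ((Finset.univ : Finset (Fin m)).filter fun i => i < f i)
      ((Finset.univ : Finset (Fin m)).filter fun i => f i < i) := by
    rw [Finset.disjoint_left]
    intro a ha hb
    simp only [Finset.mem_filter, Finset.mem_univ, true_and] at ha hb
    exact absurd hb ha.asymm
  have h4 := Finset.card_union_of_disjoint h3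
  rw [h2] at h4
  simp only [Finset.card_univ, Fintype.card_fin] at h4
  omega

def RedP (s v : ℕ) : Prop := v < 2*s+1 ∨ (4*s+1 ≤ v ∧ v < 6*s)

set_option maxHeartbeats 1600000 in
lemma core_upper {m s : ℕ} (hm : m = 8*s) (hs : 1 ≤ s) {f : Fin m → Fin m}
    (hf : Function.Involutive f) (hfp : ∀ i, f i ≠ i)
    (hcol : ∀ i : Fin m, RedP s (f i).val ↔ ¬ RedP s i.val) :
    ((crossSet m f).card : ℤ) ≤ 6*s^2 - 2*s := by
  classical
  subst hm
  set EAB := (Finset.univ : Finset (Fin (8*s))).filter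
    (fun i => (0 ≤ i.val ∧ i.val < 2*s+1) ∧ (2*s+1 ≤ (f i).val ∧ (f i).val < 4*s+1)) with hEAB
  set EAD := (Finset.univ : Finset (Fin (8*s))).filter
    (fun i => (0 ≤ i.val ∧ i.val < 2*s+1) ∧ (6*s ≤ (f i).val ∧ (f i).val < 8*s)) with hEAD
  set ECB := (Finset.univ : Finset (Fin (8*s))).filter
    (fun i => (2*s+1 ≤ i.val ∧ i.val < 4*s+1) ∧ (4*s+1 ≤ (f i).val ∧ (f i).val < 6*s)) with hECB
  set ECD := (Finset.univ : Finset (Fin (8*s))).filter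
    (fun i => (4*s+1 ≤ i.val ∧ i.val < 6*s) ∧ (6*s ≤ (f i).val ∧ (f i).val < 8*s)) with hECD
  set FBA := (Finset.univ : Finset (Fin (8*s))).filter
    (fun i => (2*s+1 ≤ i.val ∧ i.val < 4*s+1) ∧ (0 ≤ (f i).val ∧ (f i).val < 2*s+1)) with hFBA
  set FCB := (Finset.univ : Finset (Fin (8*s))).filter
    (fun i => (4*s+1 ≤ i.val ∧ i.val < 6*s) ∧ (2*s+1 ≤ (f i).val ∧ (f i).val < 4*s+1)) with hFCB
  -- block A splits
  have cardA : EAB.card + EAD.card = 2*s + 1 := by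
    have hd : Disjoint EAB EAD := by
      rw [hEAB, hEAD, Finset.disjoint_left]
      intro q hq1 hq2
      simp only [Finset.mem_filter, Finset.mem_univ, true_and] at hq1 hq2
      omega
    have hsplit : (Finset.univ : Finset (Fin (8*s))).filter
        (fun i => 0 ≤ i.val ∧ i.val < 2*s+1) = EAB ∪ EAD := by
      ext i
      simp only [hEAB, hEAD, Finset.mem_union, Finset.mem_filter, Finset.mem_univ, true_and]
      have hci := hcol i
      unfold RedP at hci
      have h1 := (f i).isLt
      have h2 := i.isLt
      omega
    have := card_val_ico (m := 8*s) (u := 0) (v := 2*s+1) (by omega)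
    rw [hsplit, Finset.card_union_of_disjoint hd] at this
    omega
  -- block B splits
  have cardB : FBA.card + ECB.card = 2*s := by
    have hd : Disjoint FBA ECB := by
      rw [hFBA, hECB, Finset.disjoint_left]
      intro q hq1 hq2
      simp only [Finset.mem_filter, Finset.mem_univ, true_and] at hq1 hq2
      omega
    have hsplit : (Finset.univ : Finset (Fin (8*s))).filter
        (fun i => 2*s+1 ≤ i.val ∧ i.val < 4*s+1) = FBA ∪ ECB := by
      ext i
      simp only [hFBA, hECB, Finset.mem_union, Finset.mem_filter, Finset.mem_univ, true_and]
      have hci := hcol i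
      unfold RedP at hci
      have h1 := (f i).isLt
      have h2 := i.isLt
      omega
    have := card_val_ico (m := 8*s) (u := 2*s+1) (v := 4*s+1) (by omega)
    rw [hsplit, Finset.card_union_of_disjoint hd] at this
    omega
  -- block C splits
  have cardC : FCB.card + ECD.card + 1 = 2*s := by
    have hd : Disjoint FCB ECD := by
      rw [hFCB, hECD, Finset.disjoint_left]
      intro q hq1 hq2
      simp only [Finset.mem_filter, Finset.mem_univ, true_and] at hq1 hq2
      omega
    have hsplit : (Finset.univ : Finset (Fin (8*s))).filter
        (fun i => 4*s+1 ≤ i.val ∧ i.val < 6*s) = FCB ∪ ECD := by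
      ext i
      simp only [hFCB, hECD, Finset.mem_union, Finset.mem_filter, Finset.mem_univ, true_and]
      have hci := hcol i
      unfold RedP at hci
      have h1 := (f i).isLt
      have h2 := i.isLt
      omega
    have := card_val_ico (m := 8*s) (u := 4*s+1) (v := 6*s) (by omega)
    rw [hsplit, Finset.card_union_of_disjoint hd] at this
    omega
  have eBA : FBA.card = EAB.card := by
    rw [hFBA, hEAB]
    exact card_invol_pred hf (fun i => 2*s+1 ≤ i.val ∧ i.val < 4*s+1)
      (fun i => 0 ≤ i.val ∧ i.val < 2*s+1)
  have eCB : FCB.card = ECB.card := by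
    rw [hFCB, hECB]
    exact card_invol_pred hf (fun i => 4*s+1 ≤ i.val ∧ i.val < 6*s)
      (fun i => 2*s+1 ≤ i.val ∧ i.val < 4*s+1)
  -- the pair set
  set R := (Finset.univ : Finset (Fin (8*s))).filter (fun i => i < f i) with hR
  have hRcard : R.card = 4*s := by
    have := card_reps hf hfp
    rw [← hR] at this
    omega
  set Pp := (R ×ˢ R).filter (fun q => q.1 < q.2) with hPp
  have hPZ : (Pp.card : ℤ) = 8*s^2 - 2*s := by
    have h2 : Pp.card * 2 = 4*s*(4*s-1) := by
      rw [hPp, card_lt_pairs, hRcard, Nat.choose_two_right]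
      apply Nat.div_mul_cancel
      refine ⟨2*s*(4*s-1), ?_⟩
      generalize (4*s-1) = u
      ring
    have h3 : ((Pp.card * 2 : ℕ) : ℤ) = ((4*s*(4*s-1) : ℕ) : ℤ) := by rw [h2]
    push_cast [Nat.cast_sub (by omega : 1 ≤ 4*s)] at h3
    nlinarith [h3]
  -- inclusion
  have hsub : (crossSet (8*s) f ∪ EAB ×ˢ ECD) ∪ EAD ×ˢ ECB ⊆ Pp := by
    apply Finset.union_subset
    apply Finset.union_subset
    · intro q hq
      rw [mem_crossSet] at hq
      rw [hPp, Finset.mem_filter, Finset.mem_product, hR]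
      obtain ⟨h1, h2, h3, _, _⟩ := hq
      exact ⟨⟨by simp [Finset.mem_filter, h2], by simp [Finset.mem_filter, h3]⟩, h1⟩
    · intro q hq
      rw [Finset.mem_product, hEAB, hECD] at hq
      simp only [Finset.mem_filter, Finset.mem_univ, true_and] at hq
      rw [hPp, Finset.mem_filter, Finset.mem_product, hR]
      simp only [Finset.mem_filter, Finset.mem_univ, true_and, Fin.lt_def]
      omega
    · intro q hq
      rw [Finset.mem_product, hEAD, hECB] at hq
      simp only [Finset.mem_filter, Finset.mem_univ, true_and] at hq
      rw [hPp, Finset.mem_filter, Finset.mem_product, hR]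
      simp only [Finset.mem_filter, Finset.mem_univ, true_and, Fin.lt_def]
      omega
  -- disjointness
  have d12 : Disjoint (crossSet (8*s) f) (EAB ×ˢ ECD) := by
    rw [Finset.disjoint_left]
    intro q hq1 hq2
    rw [mem_crossSet] at hq1
    rw [Finset.mem_product, hEAB, hECD] at hq2
    simp only [Finset.mem_filter, Finset.mem_univ, true_and] at hq2
    have := Fin.lt_def.mp hq1.2.2.2.1
    omega
  have d13 : Disjoint (crossSet (8*s) f) (EAD ×ˢ ECB) := by
    rw [Finset.disjoint_left]
    intro q hq1 hq2
    rw [mem_crossSet] at hq1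
    rw [Finset.mem_product, hEAD, hECB] at hq2
    simp only [Finset.mem_filter, Finset.mem_univ, true_and] at hq2
    have := Fin.lt_def.mp hq1.2.2.2.2
    omega
  have d23 : Disjoint (EAB ×ˢ ECD) (EAD ×ˢ ECB) := by
    rw [Finset.disjoint_left]
    intro q hq1 hq2
    rw [Finset.mem_product, hEAB, hECD] at hq1
    rw [Finset.mem_product, hEAD, hECB] at hq2
    simp only [Finset.mem_filter, Finset.mem_univ, true_and] at hq1 hq2
    omega
  have hcle : (crossSet (8*s) f).card + EAB.card * ECD.card + EAD.card * ECB.card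
      ≤ Pp.card := by
    have hle := Finset.card_le_card hsub
    rw [Finset.card_union_of_disjoint (Finset.disjoint_union_left.mpr ⟨d13, d23⟩),
      Finset.card_union_of_disjoint d12, Finset.card_product, Finset.card_product] at hle
    omega
  -- final arithmetic over ℤ
  have hx1 : 1 ≤ EAB.card := by omega
  have hcleZ : ((crossSet (8*s) f).card : ℤ) + EAB.card * ECD.card + EAD.card * ECB.card
      ≤ 8*s^2 - 2*s := by
    have := (Nat.cast_le (α := ℤ)).mpr hcle
    push_cast at this
    rw [hPZ] at this
    linarith only [this]
  have hprod : ((EAB.card : ℤ) - s) * ((EAB.card : ℤ) - s - 1) ≥ 0 := by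
    rcases le_or_gt EAB.card s with h | h
    · have h' : (EAB.card : ℤ) ≤ s := by exact_mod_cast h
      nlinarith
    · have h' : (s : ℤ) + 1 ≤ EAB.card := by exact_mod_cast h
      nlinarith
  have hzaZ : (ECB.card : ℤ) + EAB.card = 2*s := by
    have : ECB.card + EAB.card = 2*s := by omega
    exact_mod_cast this
  have hwaZ : (ECD.card : ℤ) + 1 = EAB.card := by
    have : ECD.card + 1 = EAB.card := by omega
    exact_mod_cast this
  have habZ : (EAB.card : ℤ) + EAD.card = 2*s+1 := by exact_mod_cast cardA
  nlinarith only [hcleZ, hprod, hzaZ, hwaZ, habZ, hs]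

def pairF (s v : ℕ) : ℕ :=
  if v < s then v + 3*s + 1
  else if v < 2*s+1 then v + 5*s
  else if v < 3*s+1 then v + 3*s - 1
  else if v < 4*s+1 then v - (3*s+1)
  else if v < 5*s then v + 3*s
  else if v < 6*s then v - (3*s - 1)
  else if v < 7*s+1 then v - 5*s
  else v - 3*s

lemma pairF_lt {s v : ℕ} (hs : 1 ≤ s) (h : v < 8*s) : pairF s v < 8*s := by
  unfold pairF; split_ifs <;> omega

lemma pairF_cases {s v : ℕ} (hs : 1 ≤ s) (h : v < 8*s) :
    (v < s ∧ pairF s v = v + 3*s + 1) ∨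
    (s ≤ v ∧ v < 2*s+1 ∧ pairF s v = v + 5*s) ∨
    (2*s+1 ≤ v ∧ v < 3*s+1 ∧ pairF s v = v + 3*s - 1) ∨
    (3*s+1 ≤ v ∧ v < 4*s+1 ∧ pairF s v = v - (3*s+1)) ∨
    (4*s+1 ≤ v ∧ v < 5*s ∧ pairF s v = v + 3*s) ∨
    (5*s ≤ v ∧ v < 6*s ∧ pairF s v = v - (3*s - 1)) ∨
    (6*s ≤ v ∧ v < 7*s+1 ∧ pairF s v = v - 5*s) ∨
    (7*s+1 ≤ v ∧ v < 8*s ∧ pairF s v = v - 3*s) := by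
  unfold pairF; split_ifs <;> omega

lemma pairF_invol {s v : ℕ} (hs : 1 ≤ s) (h : v < 8*s) : pairF s (pairF s v) = v := by
  have h1 := pairF_cases hs h
  have h2 := pairF_cases hs (pairF_lt hs h) (v := pairF s v)
  omega

lemma pairF_ne {s v : ℕ} (hs : 1 ≤ s) (h : v < 8*s) : pairF s v ≠ v := by
  unfold pairF; split_ifs <;> omega

lemma pairF_red {s v : ℕ} (hs : 1 ≤ s) (h : v < 8*s) :
    (pairF s v < 2*s+1 ∨ (4*s+1 ≤ pairF s v ∧ pairF s v < 6*s)) ↔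
    ¬(v < 2*s+1 ∨ (4*s+1 ≤ v ∧ v < 6*s)) := by
  unfold pairF; split_ifs <;> omega

set_option maxHeartbeats 1600000 in
lemma core_lower {m s : ℕ} (hm : m = 8*s) (hs : 1 ≤ s) :
    ∃ f : Fin m → Fin m, Function.Involutive f ∧ (∀ i, f i ≠ i) ∧
      (∀ i : Fin m, RedP s (f i).val ↔ ¬ RedP s i.val) ∧
      ((crossSet m f).card : ℤ) = 6*s^2 - 2*s := by
  subst hm
  classical
  refine ⟨fun i => ⟨pairF s i.val, pairF_lt hs i.isLt⟩, ?_, ?_, ?_, ?_⟩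
  · intro i
    apply Fin.ext
    simp only
    exact pairF_invol hs i.isLt
  · intro i h
    exact pairF_ne hs i.isLt (congrArg Fin.val h)
  · intro i
    unfold RedP
    exact pairF_red hs i.isLt
  · set f₀ : Fin (8*s) → Fin (8*s) := fun i => ⟨pairF s i.val, pairF_lt hs i.isLt⟩ with hf₀
    set R0 := (Finset.univ : Finset (Fin (8*s))).filter
      (fun i => (0 ≤ i.val ∧ i.val < 3*s+1) ∨ (4*s+1 ≤ i.val ∧ i.val < 5*s)) with hR0
    set Pp := (R0 ×ˢ R0).filter (fun q => q.1 < q.2) with hPp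
    set B1 := ((Finset.univ : Finset (Fin (8*s))).filter fun i => 0 ≤ i.val ∧ i.val < s) ×ˢ
      ((Finset.univ : Finset (Fin (8*s))).filter fun i => 4*s+1 ≤ i.val ∧ i.val < 5*s) with hB1
    set B2 := ((Finset.univ : Finset (Fin (8*s))).filter fun i => s ≤ i.val ∧ i.val < 2*s+1) ×ˢ
      ((Finset.univ : Finset (Fin (8*s))).filter fun i => 2*s+1 ≤ i.val ∧ i.val < 3*s+1) with hB2
    have hEq : crossSet (8*s) f₀ = Pp \ (B1 ∪ B2) := by
      ext q
      obtain ⟨i, j⟩ := q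
      rw [mem_crossSet, Finset.mem_sdiff, Finset.mem_union, hPp, hB1, hB2,
        Finset.mem_filter, Finset.mem_product, Finset.mem_product, Finset.mem_product, hR0]
      simp only [Finset.mem_filter, Finset.mem_univ, true_and, Fin.lt_def, hf₀]
      have hci := pairF_cases hs i.isLt
      have hcj := pairF_cases hs j.isLt
      have h1 := i.isLt
      have h2 := j.isLt
      omega
    have hR0card : R0.card = 4*s := by
      have hd : Disjoint ((Finset.univ : Finset (Fin (8*s))).filter
          (fun i => 0 ≤ i.val ∧ i.val < 3*s+1))
          ((Finset.univ : Finset (Fin (8*s))).filter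
          (fun i => 4*s+1 ≤ i.val ∧ i.val < 5*s)) := by
        rw [Finset.disjoint_left]
        intro q hq1 hq2
        simp only [Finset.mem_filter, Finset.mem_univ, true_and] at hq1 hq2
        omega
      have hsplit : R0 = (Finset.univ : Finset (Fin (8*s))).filter
          (fun i => 0 ≤ i.val ∧ i.val < 3*s+1) ∪
          (Finset.univ : Finset (Fin (8*s))).filter
          (fun i => 4*s+1 ≤ i.val ∧ i.val < 5*s) := by
        rw [hR0, ← Finset.filter_or]
      rw [hsplit, Finset.card_union_of_disjoint hd,
        card_val_ico (by omega), card_val_ico (by omega)]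
      omega
    have hPZ : (Pp.card : ℤ) = 8*s^2 - 2*s := by
      have h2 : Pp.card * 2 = 4*s*(4*s-1) := by
        rw [hPp, card_lt_pairs, hR0card, Nat.choose_two_right]
        apply Nat.div_mul_cancel
        refine ⟨2*s*(4*s-1), ?_⟩
        generalize (4*s-1) = u
        ring
      have h3 : ((Pp.card * 2 : ℕ) : ℤ) = ((4*s*(4*s-1) : ℕ) : ℤ) := by rw [h2]
      push_cast [Nat.cast_sub (by omega : 1 ≤ 4*s)] at h3
      nlinarith [h3]
    have hsubB : B1 ∪ B2 ⊆ Pp := by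
      apply Finset.union_subset
      · intro q hq
        rw [hB1, Finset.mem_product] at hq
        simp only [Finset.mem_filter, Finset.mem_univ, true_and] at hq
        rw [hPp, Finset.mem_filter, Finset.mem_product, hR0]
        simp only [Finset.mem_filter, Finset.mem_univ, true_and, Fin.lt_def]
        omega
      · intro q hq
        rw [hB2, Finset.mem_product] at hq
        simp only [Finset.mem_filter, Finset.mem_univ, true_and] at hq
        rw [hPp, Finset.mem_filter, Finset.mem_product, hR0]
        simp only [Finset.mem_filter, Finset.mem_univ, true_and, Fin.lt_def]
        omega
    have hdB : Disjoint B1 B2 := by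
      rw [hB1, hB2, Finset.disjoint_left]
      intro q hq1 hq2
      rw [Finset.mem_product] at hq1 hq2
      simp only [Finset.mem_filter, Finset.mem_univ, true_and] at hq1 hq2
      omega
    have hB1card : B1.card = s * (s-1) := by
      rw [hB1, Finset.card_product, card_val_ico (by omega), card_val_ico (by omega)]
      congr 1 <;> omega
    have hB2card : B2.card = (s+1) * s := by
      rw [hB2, Finset.card_product, card_val_ico (by omega), card_val_ico (by omega)]
      congr 1 <;> omega
    have hcard : (crossSet (8*s) f₀).card = Pp.card - (B1.card + B2.card) := by
      rw [hEq, Finset.card_sdiff_of_subset hsubB, Finset.card_union_of_disjoint hdB]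
    have hle : B1.card + B2.card ≤ Pp.card := by
      rw [← Finset.card_union_of_disjoint hdB]
      exact Finset.card_le_card hsubB
    have e1 : s * (s-1) + (s+1) * s ≤ Pp.card := by
      rw [← hB1card, ← hB2card]; exact hle
    rw [hcard, hB1card, hB2card, Nat.cast_sub e1]
    push_cast [Nat.cast_sub (by omega : 1 ≤ s)]
    rw [hPZ]
    ring

theorem stmt12' (n : ℕ) (hn4 : n % 4 = 0)
    (p : Fin (2 * n) → ℝ × ℝ) (c : Fin (2 * n) → Bool)
    (hconv : ConvexCW (2 * n) p)
    (hblock : ∃ t : Fin (2 * n),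
      0 < n/2+1 ∧ 0 < n/2 ∧ 0 < n/2-1 ∧ 0 < n/2 ∧
      (n/2+1) + (n/2) + (n/2-1) + (n/2) = 2 * n ∧ (n/2+1) + (n/2-1) = n ∧
      ∀ j : Fin (2 * n), c (t + j) =
        if (j : ℕ) < n/2+1 then true
        else if (j : ℕ) < (n/2+1) + (n/2) then false
        else if (j : ℕ) < (n/2+1) + (n/2) + (n/2-1) then true
        else false) :
    (∀ f : Fin (2 * n) → Fin (2 * n), IsBPM (2 * n) c f →
        (crNum (2 * n) p f : ℚ) ≤ 3 * (n : ℚ) ^ 2 / 8 - (n : ℚ) / 2) ∧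
    (∃ f : Fin (2 * n) → Fin (2 * n), IsBPM (2 * n) c f ∧
        (crNum (2 * n) p f : ℚ) = 3 * (n : ℚ) ^ 2 / 8 - (n : ℚ) / 2) := by
  classical
  obtain ⟨t, _, _, hr2, _, _, _, hpat⟩ := hblock
  set s := n / 4 with hsdef
  have hn : n = 4 * s := by omega
  have hs : 1 ≤ s := by omega
  have hm8 : 2 * n = 8 * s := by omega
  haveI : NeZero (2 * n) := ⟨by omega⟩
  have hm2 : 2 ≤ 2 * n := by omega
  -- color pattern in terms of RedP
  have hpat' : ∀ j : Fin (2 * n), (c (t + j) = true) ↔ RedP s j.val := by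
    intro j
    rw [hpat j]
    unfold RedP
    have hj := j.isLt
    split_ifs with h1 h2 h3 <;> simp <;> omega
  have hcomm : ∀ x : Fin (2 * n), t + (x - t) = x := fun x => by
    rw [add_comm, sub_add_cancel]
  have hval : 3 * (n : ℚ) ^ 2 / 8 - (n : ℚ) / 2 = 6 * (s : ℚ)^2 - 2 * s := by
    rw [hn]; push_cast; ring
  constructor
  · intro f hbpm
    obtain ⟨hfi, hfp, hfc⟩ := hbpm
    have hgcol : ∀ i : Fin (2 * n),
        RedP s ((fun i => f (i + t) - t) i).val ↔ ¬ RedP s i.val := by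
      intro i
      have e1 : t + (f (i + t) - t) = f (i + t) := hcomm _
      have e2 := hpat' (f (i + t) - t)
      rw [e1] at e2
      have e3 := hpat' i
      rw [← add_comm i t] at e3
      have e4 := hfc (i + t)
      have key : ∀ a b : Bool, a ≠ b → ((a = true) ↔ ¬(b = true)) := by decide
      simp only
      rw [← e2, ← e3]
      exact key _ _ e4
    have hZ := core_upper hm8 hs (conj_invol hfi t) (conj_fpf hfp t) hgcol
    rw [crNum_eq_crossSet hconv hfi, crossSet_card_conj hm2 hfi hfp t]
    have hQ : (((crossSet (2*n) (fun i => f (i + t) - t)).card : ℚ)) ≤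
        6 * (s:ℚ)^2 - 2*s := by exact_mod_cast hZ
    rw [hval]
    exact hQ
  · obtain ⟨f₀, hf₀i, hf₀p, hf₀c, hf₀card⟩ := core_lower hm8 hs
    refine ⟨fun i => f₀ (i - t) + t, ⟨?_, ?_, ?_⟩, ?_⟩
    · intro i
      show f₀ ((f₀ (i - t) + t) - t) + t = i
      rw [add_sub_cancel_right, hf₀i (i - t), sub_add_cancel]
    · intro i h
      simp only at h
      apply hf₀p (i - t)
      have := congrArg (· - t) h
      simpa [add_sub_cancel_right] using this
    · intro i
      simp only
      have e1 : c (f₀ (i - t) + t) = c (t + f₀ (i - t)) := by rw [add_comm]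
      have e2 : (c (t + f₀ (i - t)) = true) ↔ RedP s (f₀ (i - t)).val := hpat' _
      have e3 := hpat' (i - t)
      rw [hcomm i] at e3
      have e4 := hf₀c (i - t)
      rw [e1]
      intro h
      rw [h] at e2
      tauto
    · have hfun : (fun i : Fin (2*n) => (fun i => f₀ (i - t) + t) (i + t) - t) = f₀ := by
        funext i
        simp only
        rw [add_sub_cancel_right, add_sub_cancel_right]
      have hfi : Function.Involutive (fun i : Fin (2*n) => f₀ (i - t) + t) := by
        intro i
        simp only
        rw [add_sub_cancel_right, hf₀i (i - t), sub_add_cancel]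
      have hfp : ∀ i, (fun i : Fin (2*n) => f₀ (i - t) + t) i ≠ i := by
        intro i h
        simp only at h
        apply hf₀p (i - t)
        have := congrArg (· - t) h
        simpa [add_sub_cancel_right] using this
      rw [crNum_eq_crossSet hconv hfi, crossSet_card_conj hm2 hfi hfp t, hfun, hval]
      exact_mod_cast hf₀card

/-- For `n ≡ 0 (mod 4)` and a 4-block coloring with block sizes
`n/2+1, n/2, n/2−1, n/2`, the maximum number of crossings of a bichromatic perfect
matching equals `3n²/8 − n/2`. -/
theorem stmt12 (n : ℕ) (hn4 : n % 4 = 0)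
    (p : Fin (2 * n) → ℝ × ℝ) (c : Fin (2 * n) → Bool)
    (hconv : ConvexCW (2 * n) p) (hcol : Bichrom n c)
    (hblock : ∃ t : Fin (2 * n),
      FourBlockAt n c t (n / 2 + 1) (n / 2) (n / 2 - 1) (n / 2)) :
    (∀ f : Fin (2 * n) → Fin (2 * n), IsBPM (2 * n) c f →
        (crNum (2 * n) p f : ℚ) ≤ 3 * (n : ℚ) ^ 2 / 8 - (n : ℚ) / 2) ∧
    (∃ f : Fin (2 * n) → Fin (2 * n), IsBPM (2 * n) c f ∧
        (crNum (2 * n) p f : ℚ) = 3 * (n : ℚ) ^ 2 / 8 - (n : ℚ) / 2) := by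
  obtain ⟨t, hb⟩ := hblock
  obtain ⟨h1, h2, h3, h4, h5, h6, h7⟩ := hb
  exact stmt12' n hn4 p c hconv ⟨t, h1, h2, h3, h4, h5, h6, h7⟩
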